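/- For positive definite P, the operator Ω_P^{log}(B) = ∫₀^∞ (P+sI)^{-1} B (P+sI)^{-1} ds has inverse given by (Ω_P^{log})^{-1}(B) = ∫₀^1 P^t B P^{1−t} dt. -/

import Mathlib

open Matrix MeasureTheory
open scoped ComplexOrder

attribute [local instance] Matrix.normedAddCommGroup Matrix.normedSpace

open Set Filter Real

/-- Closed form for `∫₀¹ a^t b^(1-t) dt`. -/
noncomputable def Gval (a b : ℝ) : ℝ :=
  if a = b then a else (a - b) / (Real.log a - Real.log b)

lemma gval_ne_zero {a b : ℝ} (ha : 0 < a) (hb : 0 < b) : Gval a b ≠ 0 := by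
  unfold Gval
  split_ifs with h
  · exact ne_of_gt ha
  · have hlog : Real.log a ≠ Real.log b := fun hc =>
      h (Real.log_injOn_pos (mem_Ioi.2 ha) (mem_Ioi.2 hb) hc)
    exact div_ne_zero (sub_ne_zero.2 h) (sub_ne_zero.2 hlog)

lemma gexp {a b : ℝ} (ha : 0 < a) (hb : 0 < b) (t : ℝ) :
    a ^ t * b ^ (1 - t) = Real.exp ((Real.log a - Real.log b) * t + Real.log b) := by
  rw [Real.rpow_def_of_pos ha, Real.rpow_def_of_pos hb, ← Real.exp_add]
  ring_nf

lemma contG {a b : ℝ} (ha : 0 < a) (hb : 0 < b) :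
    Continuous fun t : ℝ => a ^ t * b ^ (1 - t) := by
  have : Continuous fun t : ℝ =>
      Real.exp ((Real.log a - Real.log b) * t + Real.log b) :=
    Real.continuous_exp.comp (by fun_prop)
  exact this.congr fun t => (gexp ha hb t).symm

lemma intG {a b : ℝ} (ha : 0 < a) (hb : 0 < b) :
    ∫ t in Set.Icc (0 : ℝ) 1, a ^ t * b ^ (1 - t) = Gval a b := by
  rw [MeasureTheory.integral_Icc_eq_integral_Ioc,
      ← intervalIntegral.integral_of_le (by norm_num : (0 : ℝ) ≤ 1)]
  simp_rw [gexp ha hb]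
  rcases eq_or_ne a b with h | h
  · subst h
    simp only [sub_self, zero_mul, zero_add, Gval, if_pos rfl]
    rw [intervalIntegral.integral_const]
    simp [Real.exp_log ha]
  · have hlog : Real.log a ≠ Real.log b := fun hc =>
      h (Real.log_injOn_pos (mem_Ioi.2 ha) (mem_Ioi.2 hb) hc)
    have hk : Real.log a - Real.log b ≠ 0 := sub_ne_zero.2 hlog
    rw [intervalIntegral.integral_comp_mul_add Real.exp hk (Real.log b),
        _root_.integral_exp]
    simp only [mul_zero, zero_add, mul_one]
    rw [sub_add_cancel, Real.exp_log ha, Real.exp_log hb]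
    unfold Gval
    rw [if_neg h, smul_eq_mul]
    field_simp

lemma hasDerivF_ne {a b : ℝ} (ha : 0 < a) (hb : 0 < b) (hab : a ≠ b) :
    ∀ s ∈ Ici (0 : ℝ),
      HasDerivAt (fun s => (Real.log (b + s) - Real.log (a + s)) * (a - b)⁻¹)
        (((a + s) * (b + s))⁻¹) s := by
  intro s hs
  have hs0 : (0 : ℝ) ≤ s := hs
  have has : (0 : ℝ) < a + s := by linarith
  have hbs : (0 : ℝ) < b + s := by linarith
  have h1 : HasDerivAt (fun s : ℝ => Real.log (b + s)) ((b + s)⁻¹) s := by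
    have := ((hasDerivAt_id s).const_add b).log (ne_of_gt hbs)
    simpa using this
  have h2 : HasDerivAt (fun s : ℝ => Real.log (a + s)) ((a + s)⁻¹) s := by
    have := ((hasDerivAt_id s).const_add a).log (ne_of_gt has)
    simpa using this
  have h3 := (h1.sub h2).mul_const (a - b)⁻¹
  refine h3.congr_deriv ?_
  have hab' : a - b ≠ 0 := sub_ne_zero.2 hab
  field_simp
  ring

lemma tendstoF_ne {a b : ℝ} (ha : 0 < a) (hb : 0 < b) :
    Tendsto (fun s => (Real.log (b + s) - Real.log (a + s)) * (a - b)⁻¹)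
      atTop (nhds 0) := by
  have h0 : Tendsto (fun s : ℝ => (b - a) * (a + s)⁻¹) atTop (nhds 0) := by
    rw [show (0 : ℝ) = (b - a) * 0 by ring]
    exact (tendsto_inv_atTop_zero.comp
      (tendsto_atTop_add_const_left _ a tendsto_id)).const_mul _
  have h1 : Tendsto (fun s : ℝ => (b + s) / (a + s)) atTop (nhds 1) := by
    have heq : ∀ᶠ s : ℝ in atTop, 1 + (b - a) * (a + s)⁻¹ = (b + s) / (a + s) := by
      filter_upwards [eventually_gt_atTop (0 : ℝ)] with s hs
      have has : (0 : ℝ) < a + s := by linarith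
      field_simp
      ring
    have h2 : Tendsto (fun s : ℝ => 1 + (b - a) * (a + s)⁻¹) atTop (nhds 1) := by
      simpa using tendsto_const_nhds.add h0
    exact h2.congr' heq
  have h3 : Tendsto (fun s : ℝ => Real.log ((b + s) / (a + s))) atTop (nhds 0) := by
    have := (Real.continuousAt_log one_ne_zero).tendsto.comp h1
    simpa [Real.log_one, Function.comp_def] using this
  have h4 : ∀ᶠ s : ℝ in atTop,
      Real.log ((b + s) / (a + s)) * (a - b)⁻¹
        = (Real.log (b + s) - Real.log (a + s)) * (a - b)⁻¹ := by
    filter_upwards [eventually_gt_atTop (0 : ℝ)] with s hs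
    have has : a + s ≠ 0 := by positivity
    have hbs : b + s ≠ 0 := by positivity
    rw [Real.log_div hbs has]
  simpa using (h3.mul_const ((a - b)⁻¹)).congr' h4

lemma hasDerivF_eq {a : ℝ} (ha : 0 < a) :
    ∀ s ∈ Ici (0 : ℝ),
      HasDerivAt (fun s => -(a + s)⁻¹) (((a + s) * (a + s))⁻¹) s := by
  intro s hs
  have hs0 : (0 : ℝ) ≤ s := hs
  have has : (0 : ℝ) < a + s := by linarith
  have h1 := (((hasDerivAt_id s).const_add a).inv (ne_of_gt has)).neg
  refine h1.congr_deriv ?_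
  simp only [id]
  field_simp

lemma tendstoF_eq {a : ℝ} (ha : 0 < a) :
    Tendsto (fun s : ℝ => -(a + s)⁻¹) atTop (nhds 0) := by
  simpa using (tendsto_inv_atTop_zero.comp
    (tendsto_atTop_add_const_left _ a tendsto_id)).neg

lemma Fnonneg {a b : ℝ} (ha : 0 < a) (hb : 0 < b) :
    ∀ s ∈ Ioi (0 : ℝ), 0 ≤ ((a + s) * (b + s))⁻¹ := by
  intro s hs
  have hs' : (0 : ℝ) < s := hs
  positivity

lemma intF_integrable {a b : ℝ} (ha : 0 < a) (hb : 0 < b) :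
    IntegrableOn (fun s => ((a + s) * (b + s))⁻¹) (Ioi (0 : ℝ)) := by
  rcases eq_or_ne a b with h | h
  · subst h
    exact integrableOn_Ioi_deriv_of_nonneg' (hasDerivF_eq ha) (Fnonneg ha ha)
      (tendstoF_eq ha)
  · exact integrableOn_Ioi_deriv_of_nonneg' (hasDerivF_ne ha hb h) (Fnonneg ha hb)
      (tendstoF_ne ha hb)

lemma intF_value {a b : ℝ} (ha : 0 < a) (hb : 0 < b) :
    ∫ s in Ioi (0 : ℝ), ((a + s) * (b + s))⁻¹ = (Gval a b)⁻¹ := by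
  rcases eq_or_ne a b with h | h
  · subst h
    rw [integral_Ioi_of_hasDerivAt_of_nonneg' (hasDerivF_eq ha) (Fnonneg ha ha)
      (tendstoF_eq ha)]
    simp [Gval]
  · have hlog : Real.log a ≠ Real.log b := fun hc =>
      h (Real.log_injOn_pos (mem_Ioi.2 ha) (mem_Ioi.2 hb) hc)
    rw [integral_Ioi_of_hasDerivAt_of_nonneg' (hasDerivF_ne ha hb h) (Fnonneg ha hb)
      (tendstoF_ne ha hb)]
    simp only [add_zero, Gval, if_neg h, inv_div]
    have hab : a - b ≠ 0 := sub_ne_zero.2 h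
    field_simp
    ring

noncomputable instance matrixENormedAddCommMonoid {m : ℕ} :
    ENormedAddCommMonoid (Matrix (Fin m) (Fin m) ℂ) :=
  inferInstanceAs (ENormedAddCommMonoid (Fin m → Fin m → ℂ))

section MatrixAux

variable {n : ℕ}

lemma matrix_mul_entry_sum (A B M : Matrix (Fin n) (Fin n) ℂ) :
    A * M * B = ∑ i, ∑ j, M i j • (A * Matrix.single i j 1 * B) := by
  conv_lhs => rw [matrix_eq_sum_single M]
  rw [Matrix.mul_sum, Matrix.sum_mul]
  refine Finset.sum_congr rfl fun i _ => ?_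
  rw [Matrix.mul_sum, Matrix.sum_mul]
  refine Finset.sum_congr rfl fun j _ => ?_
  have h : Matrix.single i j (M i j) = M i j • Matrix.single i j 1 := by
    rw [Matrix.smul_single, smul_eq_mul, mul_one]
  rw [h, Matrix.mul_smul, Matrix.smul_mul]

lemma integrable_matrix_conj {μ : Measure ℝ} (A B : Matrix (Fin n) (Fin n) ℂ)
    (g : Fin n → Fin n → ℝ → ℂ) (hg : ∀ i j, Integrable (g i j) μ) :
    Integrable (fun x => A * Matrix.of (fun i j => g i j x) * B) μ := by
  have h1 : (fun x => A * Matrix.of (fun i j => g i j x) * B)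
      = fun x => ∑ i, ∑ j, g i j x • (A * Matrix.single i j 1 * B) :=
    funext fun x => matrix_mul_entry_sum A B _
  rw [h1]
  exact integrable_finset_sum _ fun i _ =>
    integrable_finset_sum _ fun j _ => (hg i j).smul_const _

lemma integral_matrix_conj {μ : Measure ℝ} (A B : Matrix (Fin n) (Fin n) ℂ)
    (g : Fin n → Fin n → ℝ → ℂ) (hg : ∀ i j, Integrable (g i j) μ) :
    ∫ x, A * Matrix.of (fun i j => g i j x) * B ∂μ
      = A * Matrix.of (fun i j => ∫ x, g i j x ∂μ) * B := by
  have h1 : (fun x => A * Matrix.of (fun i j => g i j x) * B)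
      = fun x => ∑ i, ∑ j, g i j x • (A * Matrix.single i j 1 * B) :=
    funext fun x => matrix_mul_entry_sum A B _
  rw [h1]
  rw [integral_finset_sum _ fun i _ =>
    integrable_finset_sum _ fun j _ => (hg i j).smul_const _]
  have h2 : ∀ i : Fin n, (∫ x, (∑ j, g i j x • (A * Matrix.single i j 1 * B)) ∂μ)
      = ∑ j, (∫ x, g i j x ∂μ) • (A * Matrix.single i j 1 * B) := by
    intro i
    rw [integral_finset_sum _ fun j _ => (hg i j).smul_const _]
    exact Finset.sum_congr rfl fun j _ => integral_smul_const _ _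
  simp_rw [h2]
  rw [matrix_mul_entry_sum A B (Matrix.of (fun i j => ∫ x, g i j x ∂μ))]
  rfl

lemma diag_mul_mul_diag (v w : Fin n → ℂ) (N : Matrix (Fin n) (Fin n) ℂ) :
    Matrix.diagonal v * N * Matrix.diagonal w
      = Matrix.of (fun i j => v i * N i j * w j) := by
  ext i j
  rw [Matrix.mul_diagonal, Matrix.diagonal_mul]
  rfl

end MatrixAux

/-- For positive definite `P` with spectral decomposition
`P = U diag(d) Uᴴ` (`U` unitary, `d i > 0`), the operator
`Ω_P^{log}(B) = ∫₀^∞ (P+s)⁻¹ B (P+s)⁻¹ ds` has inverse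
`(Ω_P^{log})⁻¹(B) = ∫₀^1 P^t B P^{1−t} dt`, where
`P^t = U diag(d^t) Uᴴ` is given by the spectral calculus. -/
theorem omega_log_inverse {n : ℕ}
    (P : Matrix (Fin n) (Fin n) ℂ) (hP : P.PosDef)
    (U : Matrix (Fin n) (Fin n) ℂ) (hU : U * Uᴴ = 1) (hU' : Uᴴ * U = 1)
    (d : Fin n → ℝ) (hd : ∀ i, 0 < d i)
    (hPU : P = U * Matrix.diagonal (fun i => (d i : ℂ)) * Uᴴ)
    (Ppow : ℝ → Matrix (Fin n) (Fin n) ℂ)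
    (hPpow : ∀ t, Ppow t = U * Matrix.diagonal (fun i => ((d i ^ t : ℝ) : ℂ)) * Uᴴ) :
    ∀ B : Matrix (Fin n) (Fin n) ℂ,
      (∫ s in Set.Ioi (0 : ℝ),
          (P + (s : ℂ) • 1)⁻¹ *
            (∫ t in Set.Icc (0 : ℝ) 1, Ppow t * B * Ppow (1 - t)) *
          (P + (s : ℂ) • 1)⁻¹) = B ∧
      (∫ t in Set.Icc (0 : ℝ) 1,
          Ppow t *
            (∫ s in Set.Ioi (0 : ℝ), (P + (s : ℂ) • 1)⁻¹ * B * (P + (s : ℂ) • 1)⁻¹) *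
          Ppow (1 - t)) = B := by
  have huu : ∀ X Y : Matrix (Fin n) (Fin n) ℂ,
      (U * X * Uᴴ) * (U * Y * Uᴴ) = U * (X * Y) * Uᴴ := by
    intro X Y
    simp only [Matrix.mul_assoc]
    rw [← Matrix.mul_assoc Uᴴ U (Y * Uᴴ), hU', Matrix.one_mul]
  have hinv : ∀ s : ℝ, 0 < s →
      (P + (s : ℂ) • 1)⁻¹ = U * Matrix.diagonal (fun i => ((d i : ℂ) + s)⁻¹) * Uᴴ := by
    intro s hs
    have h1 : P + (s : ℂ) • 1
        = U * Matrix.diagonal (fun i => (d i : ℂ) + s) * Uᴴ := by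
      have h2 : Matrix.diagonal (fun i : Fin n => (d i : ℂ) + s)
          = Matrix.diagonal (fun i => (d i : ℂ)) + (s : ℂ) • 1 := by
        rw [Matrix.smul_one_eq_diagonal, ← Matrix.diagonal_add]
      rw [h2, Matrix.mul_add, Matrix.add_mul, ← hPU]
      congr 1
      rw [Matrix.mul_smul, Matrix.smul_mul, Matrix.mul_one, hU]
    have hne : ∀ i, (d i : ℂ) + s ≠ 0 := by
      intro i
      have : (0 : ℝ) < d i + s := by have := hd i; linarith
      intro hc
      have : ((d i + s : ℝ) : ℂ) = 0 := by push_cast; rw [← hc]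
      exact (ne_of_gt ‹(0 : ℝ) < d i + s›) (by exact_mod_cast this)
    have hdiag : (Matrix.diagonal (fun i => (d i : ℂ) + s))⁻¹
        = Matrix.diagonal (fun i => ((d i : ℂ) + s)⁻¹) := by
      apply Matrix.inv_eq_right_inv
      rw [Matrix.diagonal_mul_diagonal]
      have : (fun i => ((d i : ℂ) + s) * ((d i : ℂ) + s)⁻¹) = fun _ => (1 : ℂ) :=
        funext fun i => mul_inv_cancel₀ (hne i)
      rw [this, Matrix.diagonal_one]
    rw [h1, Matrix.mul_inv_rev, Matrix.mul_inv_rev,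
        Matrix.inv_eq_right_inv hU, Matrix.inv_eq_right_inv hU',
        hdiag, ← Matrix.mul_assoc]
  -- generic Icc step
  have icc_step : ∀ N : Matrix (Fin n) (Fin n) ℂ,
      (∫ t in Set.Icc (0 : ℝ) 1, Ppow t * (U * N * Uᴴ) * Ppow (1 - t))
        = U * Matrix.of (fun i j => ((Gval (d i) (d j) : ℝ) : ℂ) * N i j) * Uᴴ := by
    intro N
    have hrw : ∀ t : ℝ, Ppow t * (U * N * Uᴴ) * Ppow (1 - t)
        = U * Matrix.of
            (fun i j => (((d i ^ t * d j ^ (1 - t) : ℝ)) : ℂ) * N i j) * Uᴴ := by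
      intro t
      rw [hPpow t, hPpow (1 - t), huu, huu, diag_mul_mul_diag]
      congr 2
      ext i j
      simp only [Matrix.of_apply]
      push_cast
      ring
    simp_rw [hrw]
    have hint : ∀ i j : Fin n, Integrable
        (fun t : ℝ => (((d i ^ t * d j ^ (1 - t) : ℝ)) : ℂ) * N i j)
        (volume.restrict (Set.Icc (0 : ℝ) 1)) := by
      intro i j
      exact (((contG (hd i) (hd j)).integrableOn_Icc).ofReal).mul_const _
    rw [integral_matrix_conj U Uᴴ _ hint]
    congr 2
    ext i j
    simp only [Matrix.of_apply]
    rw [MeasureTheory.integral_mul_const, integral_complex_ofReal,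
        intG (hd i) (hd j)]
  -- generic Ioi step
  have ioi_step : ∀ N : Matrix (Fin n) (Fin n) ℂ,
      (∫ s in Set.Ioi (0 : ℝ),
          (P + (s : ℂ) • 1)⁻¹ * (U * N * Uᴴ) * (P + (s : ℂ) • 1)⁻¹)
        = U * Matrix.of
            (fun i j => (((Gval (d i) (d j))⁻¹ : ℝ) : ℂ) * N i j) * Uᴴ := by
    intro N
    have hrw : ∀ s ∈ Set.Ioi (0 : ℝ),
        (P + (s : ℂ) • 1)⁻¹ * (U * N * Uᴴ) * (P + (s : ℂ) • 1)⁻¹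
          = U * Matrix.of
              (fun i j => (((((d i + s) * (d j + s))⁻¹ : ℝ)) : ℂ) * N i j) * Uᴴ := by
      intro s hs
      rw [hinv s hs, huu, huu, diag_mul_mul_diag]
      congr 2
      ext i j
      simp only [Matrix.of_apply]
      push_cast [mul_inv]
      ring
    rw [MeasureTheory.setIntegral_congr_fun measurableSet_Ioi hrw]
    have hint : ∀ i j : Fin n, Integrable
        (fun s : ℝ => (((((d i + s) * (d j + s))⁻¹ : ℝ)) : ℂ) * N i j)
        (volume.restrict (Set.Ioi (0 : ℝ))) := by
      intro i j
      exact ((intF_integrable (hd i) (hd j)).ofReal).mul_const _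
    rw [integral_matrix_conj U Uᴴ _ hint]
    congr 2
    ext i j
    simp only [Matrix.of_apply]
    rw [MeasureTheory.integral_mul_const, integral_complex_ofReal,
        intF_value (hd i) (hd j)]
  intro B
  set C : Matrix (Fin n) (Fin n) ℂ := Uᴴ * B * U with hC
  have hBC : B = U * C * Uᴴ := by
    rw [hC, ← Matrix.mul_assoc, ← Matrix.mul_assoc, hU, Matrix.one_mul,
        Matrix.mul_assoc, hU, Matrix.mul_one]
  have cancel1 : ∀ i j : Fin n, ∀ c : ℂ,
      (((Gval (d i) (d j))⁻¹ : ℝ) : ℂ) * (((Gval (d i) (d j) : ℝ)) : ℂ) * c = c := by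
    intro i j c
    rw [← Complex.ofReal_mul, inv_mul_cancel₀ (gval_ne_zero (hd i) (hd j)),
        Complex.ofReal_one, one_mul]
  constructor
  · have h1 : (∫ t in Set.Icc (0 : ℝ) 1, Ppow t * B * Ppow (1 - t))
        = U * Matrix.of (fun i j => ((Gval (d i) (d j) : ℝ) : ℂ) * C i j) * Uᴴ := by
      conv_lhs => rw [hBC]
      exact icc_step C
    rw [h1, ioi_step]
    conv_rhs => rw [hBC]
    congr 2
    ext i j
    simp only [Matrix.of_apply]
    rw [← mul_assoc]
    exact cancel1 i j (C i j)
  · have h1 : (∫ s in Set.Ioi (0 : ℝ),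
        (P + (s : ℂ) • 1)⁻¹ * B * (P + (s : ℂ) • 1)⁻¹)
        = U * Matrix.of (fun i j => (((Gval (d i) (d j))⁻¹ : ℝ) : ℂ) * C i j) * Uᴴ := by
      conv_lhs => rw [hBC]
      exact ioi_step C
    rw [h1, icc_step]
    conv_rhs => rw [hBC]
    congr 2
    ext i j
    simp only [Matrix.of_apply]
    rw [← mul_assoc, mul_comm ((Gval (d i) (d j) : ℝ) : ℂ)]
    exact cancel1 i j (C i j)
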